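/- Initial algebras of strictly indexed endofunctors: let (Ē, e) be a strictly indexed endofunctor on a strictly indexed category L : C^op → Cat, with corresponding split fibration endofunctor E on Σ_C L. If (μĒ, ind_{Ē}) is the initial Ē-algebra in C and the endofunctor ē := L(ind_{Ē})⁻¹ ∘ e_{μĒ} on the fibre L(μĒ) has an initial algebra (μē, ind_{ē}), then E has initial algebra μE = (μĒ, μē) with structure map (ind_{Ē}, L(ind_{Ē})(ind_{ē})). -/

import Mathlib

universe w₂ w₁ v u

open CategoryTheory CategoryTheory.Limits Opposite

namespace CHAD

variable {C : Type u} [Category.{v} C]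

/-- The total category (Grothendieck construction) `Σ_C L` of a strictly indexed category
`L : Cᵒᵖ ⥤ Cat`. -/
structure Total (L : Cᵒᵖ ⥤ Cat.{w₂, w₁}) where
  base : C
  fib : L.obj (op base)

namespace Total

variable {L : Cᵒᵖ ⥤ Cat.{w₂, w₁}}

/-- A morphism `(W, w) ⟶ (X, x)` in `Σ_C L` is a pair `(f : W ⟶ X, f̄ : w ⟶ L(f)(x))`. -/
structure Hom (X Y : Total L) where
  base : X.base ⟶ Y.base
  fib : X.fib ⟶ (L.map base.op).toFunctor.obj Y.fib

theorem Hom.ext' {X Y : Total L} (f g : Hom X Y) (w_base : f.base = g.base)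
    (w_fib : f.fib ≫ eqToHom (by rw [w_base]) = g.fib) : f = g := by
  cases f; cases g
  dsimp at w_base
  subst w_base
  simpa using w_fib

/-- Identity morphism. -/
def id (X : Total L) : Hom X X where
  base := 𝟙 X.base
  fib := eqToHom (by simp)

/-- Composition of morphisms. -/
def comp {X Y Z : Total L} (f : Hom X Y) (g : Hom Y Z) : Hom X Z where
  base := f.base ≫ g.base
  fib := f.fib ≫ (L.map f.base.op).toFunctor.map g.fib ≫ eqToHom (by rw [op_comp, Functor.map_comp]; rfl)

attribute [local simp] eqToHom_map

instance : Category (Total L) where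
  Hom X Y := Total.Hom X Y
  id X := Total.id X
  comp f g := Total.comp f g
  id_comp f := by
    refine Hom.ext' _ _ (by simp [comp, id]) ?_
    apply eq_of_heq
    simp only [comp, id, ← Category.assoc]
    refine (comp_eqToHom_heq _ _).trans ?_
    refine (comp_eqToHom_heq _ _).trans ?_
    refine (eqToHom_comp_heq _ _).trans ?_
    exact Functor.hcongr_hom (congrArg Cat.Hom.toFunctor (L.map_id _)) f.fib
  comp_id f := by
    refine Hom.ext' _ _ (by simp [comp, id]) ?_
    apply eq_of_heq
    simp only [comp, id, eqToHom_map, ← Category.assoc]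
    refine (comp_eqToHom_heq _ _).trans ?_
    refine (comp_eqToHom_heq _ _).trans ?_
    exact comp_eqToHom_heq _ _
  assoc f g h := by
    refine Hom.ext' _ _ (by simp [comp]) ?_
    apply eq_of_heq
    simp only [comp, Functor.map_comp, eqToHom_map, ← Category.assoc]
    refine (comp_eqToHom_heq _ _).trans ?_
    refine (comp_eqToHom_heq _ _).trans ?_
    refine HEq.trans ?_ (comp_eqToHom_heq _ _).symm
    refine HEq.trans ?_ (comp_eqToHom_heq _ _).symm
    have key : ∀ {c : C} {A B B' D D' : L.obj (op c)} (a : A ⟶ B) (p : B = B') (u : B' ⟶ D)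
        (v : B ⟶ D'), D = D' → HEq u v → HEq ((a ≫ eqToHom p) ≫ u) (a ≫ v) := by
      intro c A B B' D D' a p u v hD huv
      subst p hD
      simp [eq_of_heq huv]
    refine key _ _ _ _ ?_ ?_
    · rw [op_comp, L.map_comp]; rfl
    · exact Functor.hcongr_hom (congrArg Cat.Hom.toFunctor (L.map_comp g.base.op f.base.op)) h.fib

@[simp] theorem id_base (X : Total L) : (𝟙 X : X ⟶ X).base = 𝟙 X.base := rfl

@[simp] theorem id_fib (X : Total L) :
    (𝟙 X : X ⟶ X).fib = eqToHom (by simp) := rfl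

@[simp] theorem comp_base {X Y Z : Total L} (f : X ⟶ Y) (g : Y ⟶ Z) :
    (f ≫ g).base = f.base ≫ g.base := rfl

@[simp] theorem comp_fib {X Y Z : Total L} (f : X ⟶ Y) (g : Y ⟶ Z) :
    (f ≫ g).fib = f.fib ≫ (L.map f.base.op).toFunctor.map g.fib ≫
      eqToHom (show (L.map f.base.op).toFunctor.obj ((L.map g.base.op).toFunctor.obj Z.fib) =
          (L.map (f.base ≫ g.base).op).toFunctor.obj Z.fib by
        rw [op_comp, Functor.map_comp]; rfl) := rfl

variable (L)

/-- The projection functor `Σ_C L ⥤ C`. -/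
def proj : Total L ⥤ C where
  obj X := X.base
  map f := f.base
  map_id _ := rfl
  map_comp _ _ := rfl

end Total

end CHAD

namespace CHAD

open CategoryTheory CategoryTheory.Limits Opposite

variable {C : Type u} [Category.{v} C] (L : Cᵒᵖ ⥤ Cat.{w₂, w₁})
variable (Ebar : C ⥤ C) (e : L ⟶ Ebar.op ⋙ L)

/-- The split fibration endofunctor on `Σ_C L` corresponding to a strictly indexed
endofunctor `(Ē, e)` on `L`. -/
def totalLift : Total L ⥤ Total L where
  obj X := ⟨Ebar.obj X.base, (e.app (op X.base)).toFunctor.obj X.fib⟩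
  map {X Y} f := ⟨Ebar.map f.base,
    (e.app (op X.base)).toFunctor.map f.fib ≫
      eqToHom (Functor.congr_obj (congrArg Cat.Hom.toFunctor (e.naturality f.base.op)) Y.fib)⟩
  map_id X := by
    refine Total.Hom.ext' _ _ (by simp) ?_
    apply eq_of_heq
    refine (comp_eqToHom_heq _ _).trans ?_
    refine (comp_eqToHom_heq _ _).trans ?_
    simp only [Total.id_fib, eqToHom_map]
    have key : ∀ {c : C} {A B B' : L.obj (op c)} (p : A = B) (q : A = B'), B = B' →
        HEq (eqToHom p) (eqToHom q) := by
      intro c A B B' p q h; subst p h; rfl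
    exact key _ _ (by simp)
  map_comp {X Y Z} f g := by
    refine Total.Hom.ext' _ _ (by simp) ?_
    apply eq_of_heq
    simp only [Total.comp_fib, Functor.map_comp, eqToHom_map, ← Category.assoc]
    refine (comp_eqToHom_heq _ _).trans ?_
    refine (comp_eqToHom_heq _ _).trans ?_
    refine HEq.trans ?_ (comp_eqToHom_heq _ _).symm
    refine HEq.trans ?_ (comp_eqToHom_heq _ _).symm
    have key2 : ∀ {D₁ D₂ : Cat.{w₂, w₁}} (F : D₁ ⥤ D₂) {A B B' : D₁} (a : A ⟶ B) (p : B = B'),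
        HEq (F.map (a ≫ eqToHom p)) (F.map a) := by
      intro D₁ D₂ F A B B' a p; subst p; simp
    refine (key2 _ _ _).trans ?_
    rw [Functor.map_comp]
    have key : ∀ {c : C} {A B B' D D' : L.obj (op c)} (a : A ⟶ B) (p : B = B') (u : B' ⟶ D)
        (v : B ⟶ D'), D = D' → HEq u v → HEq ((a ≫ eqToHom p) ≫ u) (a ≫ v) := by
      intro c A B B' D D' a p u v hD huv
      subst p hD
      simp [eq_of_heq huv]
    refine (key _ _ _ _ ?_ ?_).symm
    · exact (Functor.congr_obj (congrArg Cat.Hom.toFunctor (e.naturality f.base.op))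
        ((L.map g.base.op).toFunctor.obj Z.fib)).symm
    · exact (Functor.hcongr_hom (congrArg Cat.Hom.toFunctor (e.naturality f.base.op)) g.fib).symm

end CHAD

/-!
Initial algebras of strictly indexed endofunctors: let `(Ē, e)` be a strictly indexed
endofunctor on a strictly indexed category `L : Cᵒᵖ ⥤ Cat`, with corresponding split
fibration endofunctor `E` on `Σ_C L`.  If `(μĒ, ind_Ē)` is the initial `Ē`-algebra in `C`
and the endofunctor `ē := L(ind_Ē)⁻¹ ∘ e_{μĒ}` on the fibre `L(μĒ)` has an initial algebra
`(μē, ind_ē)`, then `E` has initial algebra `μE = (μĒ, μē)` with structure map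
`(ind_Ē, L(ind_Ē)(ind_ē))`.
-/

namespace CHAD

open CategoryTheory CategoryTheory.Limits Opposite

variable {C : Type u} [Category.{v} C] (L : Cᵒᵖ ⥤ Cat.{w₂, w₁})
variable (Ebar : C ⥤ C) (e : L ⟶ Ebar.op ⋙ L)

/-- The endofunctor `ē := L(ind_Ē)⁻¹ ∘ e_{μĒ}` on the fibre `L(μĒ)`.  (By Lambek's lemma the
structure map of the initial algebra is invertible.) -/
noncomputable def fibreAlgEndo (μ1 : CategoryTheory.Endofunctor.Algebra Ebar)
    (h1 : IsInitial μ1) : (L.obj (op μ1.a)) ⥤ (L.obj (op μ1.a)) :=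
  letI : IsIso μ1.str := CategoryTheory.Endofunctor.Algebra.Initial.str_isIso h1
  (e.app (op μ1.a) ≫ inv (L.map μ1.str.op)).toFunctor

/-- The algebra `(μE, ind_E) = ((μĒ, μē), (ind_Ē, L(ind_Ē)(ind_ē)))` for the split fibration
endofunctor `E` on `Σ_C L`. -/
noncomputable def totalAlgebra (μ1 : CategoryTheory.Endofunctor.Algebra Ebar)
    (h1 : IsInitial μ1)
    (μ2 : CategoryTheory.Endofunctor.Algebra (fibreAlgEndo L Ebar e μ1 h1)) :
    CategoryTheory.Endofunctor.Algebra (totalLift L Ebar e) :=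
  letI : IsIso μ1.str := CategoryTheory.Endofunctor.Algebra.Initial.str_isIso h1
  ⟨⟨μ1.a, μ2.a⟩,
    ⟨μ1.str,
      eqToHom (Functor.congr_obj (congrArg Cat.Hom.toFunctor (IsIso.inv_hom_id (L.map μ1.str.op)))
          ((e.app (op μ1.a)).toFunctor.obj μ2.a)).symm ≫
        (L.map μ1.str.op).toFunctor.map μ2.str⟩⟩

theorem Total.Hom.fib_eq {X Y : Total L} {f g : X ⟶ Y} (h : f = g) :
    f.fib = g.fib ≫ eqToHom (by rw [h]) := by subst h; simp

/-- The base `Ēbar`-algebra of an algebra for the total lift. -/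
def baseAlg (A : CategoryTheory.Endofunctor.Algebra (totalLift L Ebar e)) :
    CategoryTheory.Endofunctor.Algebra Ebar :=
  ⟨A.a.base, A.str.base⟩

/-- The fibre algebra structure on `L(f)(A.a.fib)` induced by an algebra hom `f` on bases. -/
noncomputable def fibreAlg (μ1 : CategoryTheory.Endofunctor.Algebra Ebar)
    (h1 : IsInitial μ1) (A : CategoryTheory.Endofunctor.Algebra (totalLift L Ebar e))
    (f : μ1.a ⟶ A.a.base) (hf : Ebar.map f ≫ A.str.base = μ1.str ≫ f) :
    CategoryTheory.Endofunctor.Algebra (fibreAlgEndo L Ebar e μ1 h1) :=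
  letI : IsIso μ1.str := CategoryTheory.Endofunctor.Algebra.Initial.str_isIso h1
  { a := (L.map f.op).toFunctor.obj A.a.fib
    str := (inv (L.map μ1.str.op)).toFunctor.map
        (eqToHom (Functor.congr_obj (congrArg Cat.Hom.toFunctor (e.naturality f.op)) A.a.fib) ≫
          (L.map (Ebar.map f).op).toFunctor.map A.str.fib ≫
          eqToHom (by
            have h := congrArg (fun k => (L.map k.op).toFunctor.obj A.a.fib) hf
            exact (Functor.congr_obj (congrArg Cat.Hom.toFunctor
              (L.map_comp A.str.base.op (Ebar.map f).op)) A.a.fib).symm.trans (h.trans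
              (Functor.congr_obj (congrArg Cat.Hom.toFunctor (L.map_comp f.op μ1.str.op)) A.a.fib)))) ≫
      eqToHom (Functor.congr_obj (congrArg Cat.Hom.toFunctor (IsIso.hom_inv_id (L.map μ1.str.op)))
        ((L.map f.op).toFunctor.obj A.a.fib)) }

theorem Total.Hom.fib_eq' {X Y : Total L} {f g : X ⟶ Y} (h : f = g) :
    f.fib ≫ eqToHom (by rw [h]) = g.fib := by subst h; simp

theorem fib_gen {D D' : Type*} [Category D] [Category D'] (F : D ⥤ D') (G : D' ⥤ D)
    (hFG : F ⋙ G = 𝟭 D) (hGF : G ⋙ F = 𝟭 D') {X0 X1 V1 V2 W Wc Wt : D'} {x y : D}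
    (e1 : X0 ⟶ X1) (n : X1 = V1) (a : V1 ⟶ V2) (m1 : V2 = Wt) (m2 : V2 = W)
    (s : G.obj X0 ⟶ x) (g : x ⟶ y) (q3 : X0 = F.obj (G.obj X0)) (q4 : F.obj y = Wc)
    (q5 : Wt = Wc) (t : G.obj W = y) :
    ((e1 ≫ eqToHom n) ≫ a ≫ eqToHom m1) ≫ eqToHom q5 =
        (eqToHom q3 ≫ F.map s) ≫ F.map g ≫ eqToHom q4 ↔
      G.map e1 ≫ (G.map (eqToHom n ≫ a ≫ eqToHom m2) ≫ eqToHom t) = s ≫ g := by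
  subst n m1 m2 q5 q4
  have hs := Functor.congr_hom hFG s
  have hg := Functor.congr_hom hFG g
  simp only [Functor.comp_map, Functor.id_map] at hs hg
  constructor
  · intro H
    simp only [eqToHom_refl, Category.comp_id, Category.id_comp, Category.assoc] at H ⊢
    rw [← Functor.map_comp_assoc, H]
    simp [hs, hg, eqToHom_map]
  · intro H
    simp only [eqToHom_refl, Category.comp_id, Category.id_comp, Category.assoc] at H ⊢
    rw [← Functor.map_comp_assoc] at H
    have H' := congrArg F.map (H =≫ eqToHom t.symm)
    have hk := Functor.congr_hom hGF (e1 ≫ a)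
    simp only [Functor.comp_map, Functor.id_map, Category.assoc, eqToHom_trans, eqToHom_refl,
      Category.comp_id] at H' hk
    rw [H'] at hk
    calc e1 ≫ a = eqToHom (Functor.congr_obj hGF X0).symm ≫
          (eqToHom (Functor.congr_obj hGF X0) ≫ e1 ≫ a ≫
            eqToHom (Functor.congr_obj hGF (F.obj y)).symm) ≫
          eqToHom (Functor.congr_obj hGF (F.obj y)) := by simp
      _ = eqToHom q3 ≫ F.map s ≫ F.map g := by rw [← hk]; simp [eqToHom_map]

theorem cat_map_inj {D E : Cat} (F : D ⟶ E) (G : E ⟶ D) (hFG : F ≫ G = 𝟙 D)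
    {X Y : D} {u v : X ⟶ Y} (h : F.toFunctor.map u = F.toFunctor.map v) : u = v := by
  have h2 := congrArg G.toFunctor.map h
  rw [← Cat.Hom.comp_map F G u, ← Cat.Hom.comp_map F G v, Functor.congr_hom (congrArg Cat.Hom.toFunctor hFG) u,
    Functor.congr_hom (congrArg Cat.Hom.toFunctor hFG) v] at h2
  simpa [Cat.Hom.id_map, eqToHom_comp_iff, comp_eqToHom_iff] using h2

theorem key (μ1 : CategoryTheory.Endofunctor.Algebra Ebar) (h1 : IsInitial μ1)
    (μ2 : CategoryTheory.Endofunctor.Algebra (fibreAlgEndo L Ebar e μ1 h1))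
    (A : CategoryTheory.Endofunctor.Algebra (totalLift L Ebar e))
    (f : μ1.a ⟶ A.a.base) (hf : Ebar.map f ≫ A.str.base = μ1.str ≫ f)
    (g : μ2.a ⟶ (L.map f.op).toFunctor.obj A.a.fib) :
    (totalLift L Ebar e).map
        (show (totalAlgebra L Ebar e μ1 h1 μ2).a ⟶ A.a from ⟨f, g⟩) ≫ A.str =
      (totalAlgebra L Ebar e μ1 h1 μ2).str ≫ ⟨f, g⟩ ↔
    (fibreAlgEndo L Ebar e μ1 h1).map g ≫ (fibreAlg L Ebar e μ1 h1 A f hf).str =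
      μ2.str ≫ g := by
  letI : IsIso μ1.str := CategoryTheory.Endofunctor.Algebra.Initial.str_isIso h1
  have c : (inv (L.map μ1.str.op)).toFunctor.obj ((L.map (Ebar.map f ≫ A.str.base).op).toFunctor.obj A.a.fib) =
      (L.map f.op).toFunctor.obj A.a.fib := by
    rw [hf, op_comp, L.map_comp, Cat.Hom.comp_obj]
    exact Functor.congr_obj (congrArg Cat.Hom.toFunctor (IsIso.hom_inv_id (L.map μ1.str.op))) _
  constructor
  · intro H
    have Hf := Total.Hom.fib_eq' L H
    exact (fib_gen (L.map μ1.str.op).toFunctor (inv (L.map μ1.str.op)).toFunctor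
      (congrArg Cat.Hom.toFunctor (IsIso.hom_inv_id (L.map μ1.str.op)))
      (congrArg Cat.Hom.toFunctor (IsIso.inv_hom_id (L.map μ1.str.op))) _ _ _ _ _ _ _ _ _ _ _).mp Hf
  · intro H
    refine Total.Hom.ext' _ _ ?_ ?_
    · simpa [totalLift, totalAlgebra] using hf
    · exact (fib_gen (L.map μ1.str.op).toFunctor (inv (L.map μ1.str.op)).toFunctor
        (congrArg Cat.Hom.toFunctor (IsIso.hom_inv_id (L.map μ1.str.op)))
        (congrArg Cat.Hom.toFunctor (IsIso.inv_hom_id (L.map μ1.str.op))) _ _ _ _ _ _ _ _ _ _ _).mpr H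

/-- The canonical algebra morphism out of the candidate initial algebra. -/
noncomputable def canonHom (μ1 : CategoryTheory.Endofunctor.Algebra Ebar) (h1 : IsInitial μ1)
    (μ2 : CategoryTheory.Endofunctor.Algebra (fibreAlgEndo L Ebar e μ1 h1))
    (h2 : IsInitial μ2) (A : CategoryTheory.Endofunctor.Algebra (totalLift L Ebar e)) :
    totalAlgebra L Ebar e μ1 h1 μ2 ⟶ A :=
  { f := ⟨(h1.to (baseAlg L Ebar e A)).f,
      (h2.to (fibreAlg L Ebar e μ1 h1 A (h1.to (baseAlg L Ebar e A)).f
        (h1.to (baseAlg L Ebar e A)).h)).f⟩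
    h := (key L Ebar e μ1 h1 μ2 A (h1.to (baseAlg L Ebar e A)).f
        (h1.to (baseAlg L Ebar e A)).h
        (h2.to (fibreAlg L Ebar e μ1 h1 A (h1.to (baseAlg L Ebar e A)).f
          (h1.to (baseAlg L Ebar e A)).h)).f).mpr
      (h2.to (fibreAlg L Ebar e μ1 h1 A (h1.to (baseAlg L Ebar e A)).f
        (h1.to (baseAlg L Ebar e A)).h)).h }

theorem initial_algebra_of_strictly_indexed_endofunctor
    (μ1 : CategoryTheory.Endofunctor.Algebra Ebar) (h1 : IsInitial μ1)
    (μ2 : CategoryTheory.Endofunctor.Algebra (fibreAlgEndo L Ebar e μ1 h1))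
    (h2 : IsInitial μ2) :
    Nonempty (IsInitial (totalAlgebra L Ebar e μ1 h1 μ2)) := by
  letI : IsIso μ1.str := CategoryTheory.Endofunctor.Algebra.Initial.str_isIso h1
  refine ⟨IsInitial.ofUniqueHom (fun A => canonHom L Ebar e μ1 h1 μ2 h2 A) (fun A m => ?_)⟩
  have hb : m.f.base = (h1.to (baseAlg L Ebar e A)).f := by
    have hBm : (⟨m.f.base, by
        have := congrArg Total.Hom.base m.h
        simpa [totalLift, totalAlgebra, baseAlg] using this⟩ :
        μ1 ⟶ baseAlg L Ebar e A) = h1.to (baseAlg L Ebar e A) := h1.hom_ext _ _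
    exact congrArg CategoryTheory.Endofunctor.Algebra.Hom.f hBm
  have hm : m.f = ⟨(h1.to (baseAlg L Ebar e A)).f, m.f.fib ≫ eqToHom (by rw [hb])⟩ :=
    Total.Hom.ext' _ _ hb rfl
  have hkey := (key L Ebar e μ1 h1 μ2 A (h1.to (baseAlg L Ebar e A)).f
      (h1.to (baseAlg L Ebar e A)).h (m.f.fib ≫ eqToHom (by rw [hb]; rfl))).mp
    (by have hmh := m.h; rw [hm] at hmh; exact hmh)
  have hGm : (⟨m.f.fib ≫ eqToHom (show _ = (L.map (h1.to (baseAlg L Ebar e A)).f.op).toFunctor.obj A.a.fib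
        by rw [hb]; rfl), hkey⟩ :
      μ2 ⟶ fibreAlg L Ebar e μ1 h1 A (h1.to (baseAlg L Ebar e A)).f
        (h1.to (baseAlg L Ebar e A)).h) = h2.to _ := h2.hom_ext _ _
  have hg := congrArg CategoryTheory.Endofunctor.Algebra.Hom.f hGm
  apply CategoryTheory.Endofunctor.Algebra.Hom.ext
  exact Total.Hom.ext' _ _ hb hg

end CHAD
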